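/- Suppose ⟨A_α^m : α < ω₁, m < ω⟩ is a ♣_F-sequence. Then there is a regular topology τ on ω₁, refining the order topology, such that (ω₁, τ) → (top ω+1)^1_ω, (ω₁, τ) ↛ (top ω²+1)^1_ω, and for every countable limit ordinal α and every m < ω there is a strictly increasing sequence of elements of A_α^m converging to α in τ. -/

import Mathlib

open Set Filter Topology

noncomputable def omega1 : Ordinal.{0} := (Cardinal.aleph 1).ord

def UnbddSub (A : Set Ordinal.{0}) (α : Ordinal.{0}) : Prop :=
  A ⊆ Set.Iio α ∧ ∀ β, β < α → ∃ γ ∈ A, β ≤ γ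

def IsClubF (A : Ordinal.{0} → ℕ → Set Ordinal.{0}) : Prop :=
  (∀ α, α < omega1 → Order.IsSuccLimit α → ∀ m : ℕ, UnbddSub (A α m) α) ∧
  ∀ f : Ordinal.{0} → ℕ, ∃ α n m, α < omega1 ∧ Order.IsSuccLimit α ∧
    f α = n ∧ ∀ γ ∈ A α m, f γ = n

/-- The set ω₁, as a type. -/
def W : Type 1 := {β : Ordinal.{0} // β < omega1}

noncomputable instance : LinearOrder W := inferInstanceAs (LinearOrder {β : Ordinal.{0} // β < omega1})

/-- `(W, t) → (top α)¹_ω`: every countable colouring admits a monochromatic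
subspace homeomorphic to the ordinal `α` with its order topology. -/
def ArrowTopT (t : TopologicalSpace W) (α : Ordinal.{0}) : Prop :=
  letI := t
  ∀ f : W → ℕ, ∃ (n : ℕ) (Y : Set W), Y ⊆ f ⁻¹' {n} ∧ Nonempty (Y ≃ₜ Set.Iio α)

namespace ClubFProof

lemma omega1_isLimit : Order.IsSuccLimit omega1 :=
  Cardinal.isSuccLimit_ord (by rw [← Cardinal.aleph_zero]; exact Cardinal.aleph_le_aleph.2 (by norm_num))

lemma omega1_pos : (0 : Ordinal) < omega1 := omega1_isLimit.pos

lemma succ_lt_omega1 {β : Ordinal} (h : β < omega1) : β + 1 < omega1 := omega1_isLimit.succ_lt h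

-- comparisons on W
lemma Wlt_iff {x y : W} : x < y ↔ x.1 < y.1 := Iff.rfl
lemma Wle_iff {x y : W} : x ≤ y ↔ x.1 ≤ y.1 := Iff.rfl
lemma Wext {x y : W} (h : x.1 = y.1) : x = y := Subtype.ext h

lemma wfW : WellFounded ((· < ·) : W → W → Prop) := by
  have : ((· < ·) : W → W → Prop) = InvImage ((· < ·) : Ordinal → Ordinal → Prop) Subtype.val := rfl
  rw [this]; exact InvImage.wf _ Ordinal.lt_wf

variable {A : Ordinal.{0} → ℕ → Set Ordinal.{0}}

lemma exists_ladder (hA : IsClubF A) (β : W) (hβ : Order.IsSuccLimit β.1) (m : ℕ) :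
    ∃ σ : ℕ → W, StrictMono σ ∧ (∀ k, σ k < β) ∧ (∀ k, (σ k).1 ∈ A β.1 m) ∧
      ∀ γ : W, γ < β → ∃ k, γ < σ k := by
  obtain ⟨hsub, hunb⟩ := hA.1 β.1 β.2 hβ m
  -- countability of Iio β.1
  have hcard : (Set.Iio β.1).Countable := by
    rw [← Set.countable_coe_iff, ← Cardinal.mk_le_aleph0_iff]
    rw [Ordinal.mk_Iio_ordinal]
    have h1 : β.1.card < Cardinal.aleph 1 := Cardinal.lt_ord.1 β.2
    have h2 : β.1.card ≤ Cardinal.aleph0 := by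
      have : Cardinal.aleph 1 = Order.succ (Cardinal.aleph 0) := by
        simpa using Cardinal.aleph_succ 0
      rw [this, Order.lt_succ_iff, Cardinal.aleph_zero] at h1
      exact h1
    calc Cardinal.lift.{1} β.1.card ≤ Cardinal.lift.{1} Cardinal.aleph0 :=
            Cardinal.lift_le.2 h2
      _ = Cardinal.aleph0 := Cardinal.lift_aleph0
  have hne : (Set.Iio β.1).Nonempty := ⟨0, hβ.pos⟩
  obtain ⟨E, hE⟩ := Set.Countable.exists_eq_range hcard hne
  have hElt : ∀ k, E k < β.1 := by
    intro k
    have : E k ∈ Set.Iio β.1 := by rw [hE]; exact ⟨k, rfl⟩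
    exact this
  -- step function
  have step : ∀ x : Ordinal, x < β.1 → ∃ δ : Ordinal, δ ∈ A β.1 m ∧ x < δ ∧ δ < β.1 := by
    intro x hx
    obtain ⟨δ, hδ, hge⟩ := hunb (x + 1) (hβ.succ_lt hx)
    exact ⟨δ, hδ, lt_of_lt_of_le (lt_add_one x) hge, hsub hδ⟩
  -- recursive construction
  have key : ∀ k : ℕ, ∀ x : Ordinal, x < β.1 → ∃ δ, δ ∈ A β.1 m ∧ x < δ ∧ δ < β.1 := fun _ => step
  let F : ℕ → {δ : Ordinal // δ ∈ A β.1 m ∧ δ < β.1} → {δ : Ordinal // δ ∈ A β.1 m ∧ δ < β.1} :=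
    fun k p => ⟨Classical.choose (step (max p.1 (E (k+1))) (max_lt p.2.2 (hElt (k+1)))),
      (Classical.choose_spec (step (max p.1 (E (k+1))) (max_lt p.2.2 (hElt (k+1))))).1,
      (Classical.choose_spec (step (max p.1 (E (k+1))) (max_lt p.2.2 (hElt (k+1))))).2.2⟩
  let z0 : {δ : Ordinal // δ ∈ A β.1 m ∧ δ < β.1} :=
    ⟨Classical.choose (step (E 0) (hElt 0)),
      (Classical.choose_spec (step (E 0) (hElt 0))).1,
      (Classical.choose_spec (step (E 0) (hElt 0))).2.2⟩
  let G : ℕ → {δ : Ordinal // δ ∈ A β.1 m ∧ δ < β.1} := fun k => Nat.rec z0 F k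
  have hG0 : E 0 < (G 0).1 := (Classical.choose_spec (step (E 0) (hElt 0))).2.1
  have hGsucc : ∀ k, max (G k).1 (E (k+1)) < (G (k+1)).1 := by
    intro k
    exact (Classical.choose_spec (step (max (G k).1 (E (k+1)))
      (max_lt (G k).2.2 (hElt (k+1))))).2.1
  have hmono : StrictMono (fun k => (G k).1) := by
    apply strictMono_nat_of_lt_succ
    intro k; exact lt_of_le_of_lt (le_max_left _ _) (hGsucc k)
  refine ⟨fun k => ⟨(G k).1, lt_trans (G k).2.2 β.2⟩, ?_, ?_, ?_, ?_⟩
  · intro a b h; exact hmono h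
  · intro k; exact (G k).2.2
  · intro k; exact (G k).2.1
  · intro γ hγ
    have : γ.1 ∈ Set.Iio β.1 := hγ
    rw [hE] at this
    obtain ⟨k, hk⟩ := this
    cases k with
    | zero => exact ⟨0, by refine Wlt_iff.2 ?_; simp only [← hk]; exact hG0⟩
    | succ k => exact ⟨k+1, by
        refine Wlt_iff.2 ?_
        calc γ.1 = E (k+1) := hk.symm
          _ ≤ max (G k).1 (E (k+1)) := le_max_right _ _
          _ < (G (k+1)).1 := hGsucc k⟩


variable (lad : W → ℕ → ℕ → W)
-- abstract ladder system interface
structure LadderSys (lad : W → ℕ → ℕ → W) : Prop where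
  mono : ∀ β : W, Order.IsSuccLimit β.1 → ∀ m, StrictMono (lad β m)
  lt : ∀ β : W, Order.IsSuccLimit β.1 → ∀ m k, lad β m k < β
  cof : ∀ β : W, Order.IsSuccLimit β.1 → ∀ m (γ : W), γ < β → ∃ k, γ < lad β m k
  junk : ∀ β : W, ¬Order.IsSuccLimit β.1 → ∀ m k, (lad β m k).1 ≤ (lad β 0 m).1

/-- the ladder topology -/
def topo : TopologicalSpace W where
  IsOpen U := ∀ β ∈ U, Order.IsSuccLimit β.1 → ∀ m, ∃ K, ∀ k, K ≤ k → lad β m k ∈ U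
  isOpen_univ := fun β _ _ m => ⟨0, fun k _ => trivial⟩
  isOpen_inter := by
    intro s t hs ht β hβ hlim m
    obtain ⟨K1, h1⟩ := hs β hβ.1 hlim m
    obtain ⟨K2, h2⟩ := ht β hβ.2 hlim m
    exact ⟨max K1 K2, fun k hk => ⟨h1 k (le_trans (le_max_left _ _) hk),
      h2 k (le_trans (le_max_right _ _) hk)⟩⟩
  isOpen_sUnion := by
    intro S hS β hβ hlim m
    obtain ⟨s, hs, hβs⟩ := hβ
    obtain ⟨K, hK⟩ := hS s hs β hβs hlim m
    exact ⟨K, fun k hk => ⟨s, hs, hK k hk⟩⟩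

lemma isOpen_iff {U : Set W} :
    IsOpen[topo lad] U ↔ ∀ β ∈ U, Order.IsSuccLimit β.1 → ∀ m, ∃ K, ∀ k, K ≤ k → lad β m k ∈ U :=
  Iff.rfl

-- tails: eventually the ladder exceeds any γ < β
lemma lad_tail_gt (hl : LadderSys lad) (β : W) (hβ : Order.IsSuccLimit β.1) (m : ℕ) (γ : W) (hγ : γ < β) :
    ∃ K, ∀ k, K ≤ k → γ < lad β m k := by
  obtain ⟨K, hK⟩ := hl.cof β hβ m γ hγ
  exact ⟨K, fun k hk => lt_of_lt_of_le hK (((hl.mono β hβ m).monotone hk))⟩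

-- eventually the ladder avoids a point
lemma lad_tail_ne (hl : LadderSys lad) (β : W) (hβ : Order.IsSuccLimit β.1) (m : ℕ) (y : W) :
    ∃ K, ∀ k, K ≤ k → lad β m k ≠ y := by
  by_cases h : ∃ k0, lad β m k0 = y
  · obtain ⟨k0, hk0⟩ := h
    refine ⟨k0 + 1, fun k hk he => ?_⟩
    have : k = k0 := (hl.mono β hβ m).injective (he.trans hk0.symm)
    omega
  · exact ⟨0, fun k _ he => h ⟨k, he⟩⟩

lemma isOpen_Ioi (hl : LadderSys lad) (a : W) : IsOpen[topo lad] (Set.Ioi a) := by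
  rw [isOpen_iff]
  intro β hβ hlim m
  obtain ⟨K, hK⟩ := lad_tail_gt lad hl β hlim m a hβ
  exact ⟨K, fun k hk => hK k hk⟩

lemma isOpen_Iio (hl : LadderSys lad) (a : W) : IsOpen[topo lad] (Set.Iio a) := by
  rw [isOpen_iff]
  intro β hβ hlim m
  exact ⟨0, fun k _ => lt_trans (hl.lt β hlim m k) hβ⟩

lemma topo_le_order (hl : LadderSys lad) : topo lad ≤ Preorder.topology W := by
  rw [Preorder.topology]
  rw [TopologicalSpace.le_generateFrom_iff_subset_isOpen]
  rintro s ⟨a, (rfl | rfl)⟩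
  · exact isOpen_Ioi lad hl a
  · exact isOpen_Iio lad hl a

lemma t1 (hl : LadderSys lad) : @T1Space W (topo lad) := by
  letI := topo lad
  rw [t1Space_iff_exists_open]
  intro x y hxy
  -- find open set containing x, not y
  rcases lt_or_gt_of_ne hxy with h | h
  · exact ⟨Set.Iio y, isOpen_Iio lad hl y, h, by simp⟩
  · exact ⟨Set.Ioi y, isOpen_Ioi lad hl y, h, by simp⟩

-- open sets minus "ladder-finite" sets: D such that every ladder meets D in a finite set of indices
def LadSmall (D : Set W) : Prop :=
  ∀ β : W, Order.IsSuccLimit β.1 → ∀ m, ∃ K, ∀ k, K ≤ k → lad β m k ∉ D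

lemma isOpen_diff_ladSmall {U D : Set W} (hU : IsOpen[topo lad] U) (hD : LadSmall lad D) :
    IsOpen[topo lad] (U \ D) := by
  rw [isOpen_iff]
  intro β hβ hlim m
  obtain ⟨K1, h1⟩ := hU β hβ.1 hlim m
  obtain ⟨K2, h2⟩ := hD β hlim m
  exact ⟨max K1 K2, fun k hk => ⟨h1 k (le_trans (le_max_left _ _) hk),
    h2 k (le_trans (le_max_right _ _) hk)⟩⟩

lemma finset_ladSmall (hl : LadderSys lad) (F : Set W) (hF : F.Finite) : LadSmall lad F := by
  intro β hβ m
  have hfin : {k | lad β m k ∈ F}.Finite :=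
    Set.Finite.preimage (Set.injOn_of_injective (hl.mono β hβ m).injective) hF
  obtain ⟨K, hK⟩ := hfin.bddAbove
  exact ⟨K + 1, fun k hk hmem => by
    have := hK hmem
    omega⟩

-- tendsto of ladders
lemma lad_tendsto (β : W) (hβ : Order.IsSuccLimit β.1) (m : ℕ) :
    Filter.Tendsto (lad β m) Filter.atTop (@nhds W (topo lad) β) := by
  letI := topo lad
  rw [tendsto_nhds]
  intro s hs hβs
  obtain ⟨K, hK⟩ := hs β hβs hβ m
  rw [Filter.mem_atTop_sets]
  exact ⟨K, fun k hk => hK k hk⟩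




-- ===================== V recursion =====================
section Vsec
variable (lad : W → ℕ → ℕ → W) (U : Set W)

noncomputable def Vmu (β : W) (ε : Ordinal.{0}) (m : ℕ) : Ordinal.{0} := max ε (lad β 0 m).1

noncomputable def Vtau (β : W) (m : ℕ) : ℕ := sInf {K | ∀ k, K ≤ k → lad β m k ∈ U}

def Vguard (β : W) (ε : Ordinal.{0}) (m j : ℕ) : Prop :=
  Vmu lad β ε m < (lad β m j).1 ∧ Vtau lad U β m ≤ j

noncomputable def Vcut (β : W) (ε : Ordinal.{0}) (m j : ℕ) : Ordinal.{0} :=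
  max (Vmu lad β ε m) (if j = 0 then 0 else (lad β m (j-1)).1)

noncomputable def Vset : W → Ordinal.{0} → Set W :=
  WellFounded.fix wfW (fun β rec ε =>
    insert β (⋃ (m : ℕ) (j : ℕ) (h : Vguard lad U β ε m j ∧ lad β m j < β),
      rec (lad β m j) h.2 (Vcut lad β ε m j)))

lemma Vset_def (β : W) (ε : Ordinal.{0}) :
    Vset lad U β ε = insert β (⋃ (m : ℕ) (j : ℕ)
      (_ : Vguard lad U β ε m j ∧ lad β m j < β),
      Vset lad U (lad β m j) (Vcut lad β ε m j)) := by
  conv_lhs => rw [Vset, WellFounded.fix_eq]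
  rfl

lemma mem_Vset_iff {x β : W} {ε : Ordinal.{0}} :
    x ∈ Vset lad U β ε ↔ x = β ∨ ∃ m j, (Vguard lad U β ε m j ∧ lad β m j < β) ∧
      x ∈ Vset lad U (lad β m j) (Vcut lad β ε m j) := by
  rw [Vset_def, Set.mem_insert_iff]
  simp only [Set.mem_iUnion, exists_prop]

lemma self_mem_Vset (β : W) (ε : Ordinal.{0}) : β ∈ Vset lad U β ε := by
  rw [mem_Vset_iff]; exact Or.inl rfl

lemma block_subset_Vset {β : W} {ε : Ordinal.{0}} {m j : ℕ}
    (h : Vguard lad U β ε m j ∧ lad β m j < β) :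
    Vset lad U (lad β m j) (Vcut lad β ε m j) ⊆ Vset lad U β ε := by
  intro x hx
  rw [mem_Vset_iff]
  exact Or.inr ⟨m, j, h, hx⟩

variable {lad}

lemma Vguard_limit (hl : LadderSys lad) {β : W} {ε : Ordinal.{0}} {m j : ℕ}
    (h : Vguard lad U β ε m j) : Order.IsSuccLimit β.1 := by
  by_contra hnl
  have := hl.junk β hnl m j
  have h2 := h.1
  rw [Vmu] at h2
  exact absurd (lt_of_le_of_lt (le_max_right ε _) h2) (not_lt.2 this)

lemma Vcut_lt_root (hl : LadderSys lad) {β : W} {ε : Ordinal.{0}} {m j : ℕ}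
    (h : Vguard lad U β ε m j) : Vcut lad β ε m j < (lad β m j).1 := by
  have hβ : Order.IsSuccLimit β.1 := Vguard_limit U hl h
  rw [Vcut]
  apply max_lt h.1
  by_cases hj : j = 0
  · rw [if_pos hj]
    exact lt_of_le_of_lt zero_le h.1
  · rw [if_neg hj]
    exact hl.mono β hβ m (by omega : j - 1 < j)

lemma Vset_subset_Iic (hl : LadderSys lad) :
    ∀ β : W, ∀ (ε : Ordinal.{0}) (x : W), x ∈ Vset lad U β ε →
      x ≤ β ∧ (x = β ∨ ε < x.1) := by
  intro β
  refine wfW.induction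
    (C := fun β => ∀ (ε : Ordinal.{0}) (x : W), x ∈ Vset lad U β ε →
      x ≤ β ∧ (x = β ∨ ε < x.1)) β ?_
  intro β IH ε x hx
  rw [mem_Vset_iff] at hx
  rcases hx with rfl | ⟨m, j, ⟨hg, hlt⟩, hx⟩
  · exact ⟨le_refl _, Or.inl rfl⟩
  · obtain ⟨h1, h2⟩ := IH (lad β m j) hlt (Vcut lad β ε m j) x hx
    constructor
    · exact le_trans h1 (le_of_lt hlt)
    · right
      rcases h2 with rfl | h2
      · exact lt_of_le_of_lt (le_max_left _ _) hg.1
      · calc ε ≤ Vmu lad β ε m := le_max_left _ _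
          _ ≤ Vcut lad β ε m j := le_max_left _ _
          _ < x.1 := h2

lemma Vset_subset_open (hl : LadderSys lad) (hU : IsOpen[topo lad] U) :
    ∀ β : W, β ∈ U → ∀ ε : Ordinal.{0}, Vset lad U β ε ⊆ U := by
  intro β
  refine wfW.induction
    (C := fun β => β ∈ U → ∀ ε : Ordinal.{0}, Vset lad U β ε ⊆ U) β ?_
  intro β IH hβU ε x hx
  rw [mem_Vset_iff] at hx
  rcases hx with rfl | ⟨m, j, ⟨hg, hlt⟩, hx⟩
  · exact hβU
  · have hβ : Order.IsSuccLimit β.1 := Vguard_limit U hl hg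
    have hroot : lad β m j ∈ U := by
      have hne : {K | ∀ k, K ≤ k → lad β m k ∈ U}.Nonempty := hU β hβU hβ m
      exact Nat.sInf_mem hne j hg.2
    exact IH (lad β m j) hlt hroot (Vcut lad β ε m j) hx

lemma Vset_isOpen (hl : LadderSys lad) (hU : IsOpen[topo lad] U) :
    ∀ β : W, β ∈ U → ∀ ε : Ordinal.{0}, ε < β.1 → IsOpen[topo lad] (Vset lad U β ε) := by
  intro β
  refine wfW.induction
    (C := fun β => β ∈ U → ∀ ε : Ordinal.{0}, ε < β.1 → IsOpen[topo lad] (Vset lad U β ε)) β ?_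
  intro β IH hβU ε hε
  rw [isOpen_iff]
  intro z hz hzlim m
  rw [mem_Vset_iff] at hz
  rcases hz with rfl | ⟨m', j, ⟨hg, hlt⟩, hz⟩
  · -- z = β, β is a limit
    have hmuW : Vmu lad z ε m < omega1 :=
      max_lt (lt_trans hε z.2) (lt_trans (hl.lt z hzlim 0 m) z.2)
    obtain ⟨M, hM⟩ := lad_tail_gt lad hl z hzlim m ⟨Vmu lad z ε m, hmuW⟩
      (Wlt_iff.2 (max_lt hε (hl.lt z hzlim 0 m)))
    refine ⟨max M (Vtau lad U z m), fun k hk => ?_⟩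
    have hg' : Vguard lad U z ε m k :=
      ⟨hM k (le_trans (le_max_left _ _) hk), le_trans (le_max_right _ _) hk⟩
    exact block_subset_Vset lad U ⟨hg', hl.lt z hzlim m k⟩
      (self_mem_Vset lad U (lad z m k) (Vcut lad z ε m k))
  · -- z in a block: use IH on the root
    have hβ : Order.IsSuccLimit β.1 := Vguard_limit U hl hg
    have hroot : lad β m' j ∈ U := by
      have hne : {K | ∀ k, K ≤ k → lad β m' k ∈ U}.Nonempty := hU β hβU hβ m'
      exact Nat.sInf_mem hne j hg.2
    have hop := IH (lad β m' j) hlt hroot (Vcut lad β ε m' j) (Vcut_lt_root U hl hg)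
    rw [isOpen_iff] at hop
    obtain ⟨K, hK⟩ := hop z hz hzlim m
    exact ⟨K, fun k hk => block_subset_Vset lad U ⟨hg, hlt⟩ (hK k hk)⟩

lemma Vset_closed_aux (hl : LadderSys lad) :
    ∀ β : W, ∀ (ε : Ordinal.{0}) (x : W), Order.IsSuccLimit x.1 → x ∉ Vset lad U β ε → ∀ m,
      {k | lad x m k ∈ Vset lad U β ε}.Finite := by
  intro β
  refine wfW.induction
    (C := fun β => ∀ (ε : Ordinal.{0}) (x : W), Order.IsSuccLimit x.1 → x ∉ Vset lad U β ε → ∀ m,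
      {k | lad x m k ∈ Vset lad U β ε}.Finite) β ?_
  intro β IH ε x hxlim hxV m
  rcases lt_trichotomy x β with hc | hc | hc
  · -- x < β
    by_cases hβ : Order.IsSuccLimit β.1
    swap
    · -- no blocks exist
      apply Set.Finite.subset (Set.Subsingleton.finite
        (fun a ha b hb => (hl.mono x hxlim m).injective
          ((ha : lad x m a = β).trans (hb : lad x m b = β).symm)))
      intro k hk
      rw [Set.mem_setOf_eq, mem_Vset_iff] at hk
      rcases hk with h | ⟨m', j, ⟨hg, _⟩, _⟩
      · exact h
      · exact absurd (Vguard_limit U hl hg) hβ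
    · obtain ⟨M0', hM0'⟩ := hl.cof β hβ 0 x hc
      set M0 := M0'
      have hMprop : ∀ m', M0 ≤ m' → x < lad β 0 m' :=
        fun m' h => lt_of_lt_of_le hM0' ((hl.mono β hβ 0).monotone h)
      have hJ : ∀ m' : ℕ, ∃ J, ∀ j, J ≤ j → x < lad β m' j :=
        fun m' => lad_tail_gt lad hl β hβ m' x hc
      choose Jf hJf using hJ
      set JJ := (Finset.range M0).sup Jf + 2 with hJJ
      have hcov : {k | lad x m k ∈ Vset lad U β ε} ⊆
          {k | lad x m k = β} ∪ ⋃ (m' ∈ Finset.range M0) (j ∈ Finset.range JJ),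
            {k | (Vguard lad U β ε m' j ∧ lad β m' j < β) ∧
              lad x m k ∈ Vset lad U (lad β m' j) (Vcut lad β ε m' j)} := by
        intro k hk
        rw [Set.mem_setOf_eq, mem_Vset_iff] at hk
        rcases hk with h | ⟨m', j, ⟨hg, hlt⟩, hmem⟩
        · exact Or.inl h
        · right
          have hy := hl.lt x hxlim m k  -- lad x m k < x
          obtain ⟨hyle, hyor⟩ := Vset_subset_Iic U hl (lad β m' j) (Vcut lad β ε m' j)
            (lad x m k) hmem
          have hm'M : m' < M0 := by
            by_contra hge
            push_neg at hge
            have hxlt : x < lad β 0 m' := hMprop m' hge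
            have hmu : x.1 ≤ Vmu lad β ε m' := le_trans (le_of_lt hxlt) (le_max_right _ _)
            rcases hyor with he | hgt
            · have : x.1 < (lad x m k).1 := by
                rw [he]
                exact lt_of_le_of_lt hmu hg.1
              exact absurd hy (not_lt.2 (le_of_lt this))
            · have : x.1 < (lad x m k).1 :=
                lt_of_le_of_lt (le_trans hmu (le_max_left _ _)) hgt
              exact absurd hy (not_lt.2 (le_of_lt this))
          have hjJ : j < JJ := by
            by_contra hge
            push_neg at hge
            have hj1 : j ≠ 0 := by omega
            have hjf : Jf m' ≤ j - 1 := by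
              have : Jf m' ≤ (Finset.range M0).sup Jf :=
                Finset.le_sup (Finset.mem_range.2 hm'M)
              omega
            have hxlt : x < lad β m' (j-1) := hJf m' (j-1) hjf
            have hcut : x.1 ≤ Vcut lad β ε m' j := by
              rw [Vcut, if_neg hj1]
              exact le_trans (le_of_lt hxlt) (le_max_right _ _)
            rcases hyor with he | hgt
            · have : x.1 < (lad x m k).1 := by
                rw [he]
                calc x.1 < (lad β m' (j-1)).1 := hxlt
                  _ < (lad β m' j).1 := hl.mono β hβ m' (by omega : j - 1 < j)
              exact absurd hy (not_lt.2 (le_of_lt this))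
            · have : x.1 < (lad x m k).1 := lt_of_le_of_lt hcut hgt
              exact absurd hy (not_lt.2 (le_of_lt this))
          simp only [Set.mem_iUnion]
          exact ⟨m', Finset.mem_range.2 hm'M, j, Finset.mem_range.2 hjJ, ⟨⟨hg, hlt⟩, hmem⟩⟩
      apply Set.Finite.subset _ hcov
      apply Set.Finite.union
      · exact Set.Subsingleton.finite (fun a ha b hb => (hl.mono x hxlim m).injective
          ((ha : lad x m a = β).trans (hb : lad x m b = β).symm))
      · apply Set.Finite.biUnion (Finset.range M0).finite_toSet
        intro m' _
        apply Set.Finite.biUnion (Finset.range JJ).finite_toSet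
        intro j _
        by_cases hgj : Vguard lad U β ε m' j ∧ lad β m' j < β
        · have hxnb : x ∉ Vset lad U (lad β m' j) (Vcut lad β ε m' j) :=
            fun hxb => hxV (block_subset_Vset lad U hgj hxb)
          apply Set.Finite.subset (IH (lad β m' j) hgj.2 (Vcut lad β ε m' j) x hxlim hxnb m)
          intro k hk
          exact hk.2
        · convert Set.finite_empty
          ext k
          simp only [Set.mem_setOf_eq, Set.mem_empty_iff_false, iff_false]
          exact fun h => hgj h.1
  · -- x = β : contradiction
    exact absurd (hc ▸ self_mem_Vset lad U β ε) hxV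
  · -- β < x
    obtain ⟨k0, hk0⟩ := hl.cof x hxlim m β hc
    apply Set.Finite.subset (Set.finite_Iio k0)
    intro k hk
    rw [Set.mem_setOf_eq] at hk
    have hle : lad x m k ≤ β := (Vset_subset_Iic U hl β ε (lad x m k) hk).1
    by_contra hge
    rw [Set.mem_Iio, not_lt] at hge
    have : β < lad x m k := lt_of_lt_of_le hk0 ((hl.mono x hxlim m).monotone hge)
    exact absurd hle (not_le.2 this)

lemma Vset_isClosed (hl : LadderSys lad) (β : W) (ε : Ordinal.{0}) :
    IsClosed[topo lad] (Vset lad U β ε) := by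
  letI := topo lad
  rw [← isOpen_compl_iff, isOpen_iff]
  intro z hz hzlim m
  have hfin := Vset_closed_aux U hl β ε z hzlim hz m
  obtain ⟨K, hK⟩ := hfin.bddAbove
  refine ⟨K + 1, fun k hk => ?_⟩
  intro hmem
  have := hK hmem
  omega

end Vsec

lemma t3 {lad : W → ℕ → ℕ → W} (hl : LadderSys lad) : @T3Space W (topo lad) := by
  letI := topo lad
  haveI ht1 : T1Space W := t1 lad hl
  haveI hreg : RegularSpace W := by
    apply RegularSpace.of_exists_mem_nhds_isClosed_subset
    intro x s hs
    obtain ⟨u, husub, huo, hxu⟩ := mem_nhds_iff.1 hs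
    by_cases hx0 : x.1 = 0
    · have hop : IsOpen {x} := by
        rw [isOpen_iff]
        intro z hz hzlim m'
        exfalso
        rw [Set.mem_singleton_iff] at hz
        rw [hz] at hzlim
        exact absurd hx0 hzlim.pos.ne'
      refine ⟨{x}, IsOpen.mem_nhds hop rfl, isClosed_singleton,
        subset_trans (by simpa using hxu) husub⟩
    · refine ⟨Vset lad u x 0, ?_, Vset_isClosed u hl x 0,
        subset_trans (Vset_subset_open u hl huo x hxu 0) husub⟩
      exact IsOpen.mem_nhds (Vset_isOpen u hl huo x hxu 0 (pos_iff_ne_zero.2 hx0))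
        (self_mem_Vset lad u x 0)
  exact { toT0Space := inferInstance, toRegularSpace := hreg }

-- ===================== the ω+1 homeomorph =====================
section Homeo
variable {lad : W → ℕ → ℕ → W}

/-- the subspace `{p} ∪ range σ` is homeomorphic to `ω+1` -/
lemma ladder_homeo (hl : LadderSys lad) (p : W) (hp : Order.IsSuccLimit p.1) (m : ℕ) :
    Nonempty (@Homeomorph (↥(Set.Iio (Ordinal.omega0 + 1)))
      (↥(insert p (Set.range (lad p m))))
      inferInstance (@instTopologicalSpaceSubtype W _ (topo lad))) := by
  classical
  letI : TopologicalSpace W := topo lad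
  set σ : ℕ → W := lad p m with hσ
  have hmono : StrictMono σ := hl.mono p hp m
  have hltp : ∀ k, σ k < p := hl.lt p hp m
  have hpnr : p ∉ Set.range σ := by
    rintro ⟨k, hk⟩
    exact absurd (hk ▸ hltp k) (lt_irrefl p)
  set Y : Set W := insert p (Set.range σ) with hY
  have homega_mem : Ordinal.omega0 ∈ Set.Iio (Ordinal.omega0 + 1) :=
    Set.mem_Iio.2 (Order.lt_add_one_iff.2 le_rfl)
  have hnat_mem : ∀ n : ℕ, (n : Ordinal) ∈ Set.Iio (Ordinal.omega0 + 1) :=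
    fun n => Set.mem_Iio.2 (lt_trans (Ordinal.nat_lt_omega0 n) (Order.lt_add_one_iff.2 le_rfl))
  -- toFun
  set F : ↥(Set.Iio (Ordinal.omega0 + 1)) → ↥Y :=
    fun x => if h : x.1 < Ordinal.omega0 then
      ⟨σ (Classical.choose (Ordinal.lt_omega0.1 h)), Or.inr ⟨_, rfl⟩⟩
    else ⟨p, Or.inl rfl⟩ with hF
  set G : ↥Y → ↥(Set.Iio (Ordinal.omega0 + 1)) :=
    fun y => if h : ∃ k, σ k = y.1 then
      ⟨((Classical.choose h : ℕ) : Ordinal), hnat_mem _⟩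
    else ⟨Ordinal.omega0, homega_mem⟩ with hG
  have hF_nat : ∀ (x : ↥(Set.Iio (Ordinal.omega0 + 1))) (n : ℕ), x.1 = (n : Ordinal) →
      (F x).1 = σ n := by
    intro x n hx
    have h : x.1 < Ordinal.omega0 := by rw [hx]; exact Ordinal.nat_lt_omega0 n
    have hval : (F x).1 = σ (Classical.choose (Ordinal.lt_omega0.1 h)) := by
      rw [hF]; simp only [dif_pos h]
    rw [hval]
    have hspec := Classical.choose_spec (Ordinal.lt_omega0.1 h)
    have heq : Classical.choose (Ordinal.lt_omega0.1 h) = n :=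
      Nat.cast_inj.1 (by rw [← hspec, hx])
    rw [heq]
  have hF_top : ∀ (x : ↥(Set.Iio (Ordinal.omega0 + 1))), x.1 = Ordinal.omega0 →
      (F x).1 = p := by
    intro x hx
    have h : ¬ x.1 < Ordinal.omega0 := by rw [hx]; exact lt_irrefl _
    rw [hF]; simp only [dif_neg h]
  have hG_nat : ∀ (y : ↥Y) (n : ℕ), y.1 = σ n → (G y).1 = (n : Ordinal) := by
    intro y n hy
    have h : ∃ k, σ k = y.1 := ⟨n, hy.symm⟩
    have hval : (G y).1 = ((Classical.choose h : ℕ) : Ordinal) := by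
      rw [hG]; simp only [dif_pos h]
    rw [hval]
    have hspec := Classical.choose_spec h
    have heq : Classical.choose h = n := hmono.injective (by rw [hspec, hy])
    rw [heq]
  have hG_top : ∀ (y : ↥Y), y.1 = p → (G y).1 = Ordinal.omega0 := by
    intro y hy
    have h : ¬ ∃ k, σ k = y.1 := by
      rintro ⟨k, hk⟩
      exact hpnr ⟨k, hk.trans hy⟩
    rw [hG]; simp only [dif_neg h]
  -- case analysis helpers
  have hcase : ∀ x : ↥(Set.Iio (Ordinal.omega0 + 1)),
      x.1 = Ordinal.omega0 ∨ ∃ n : ℕ, x.1 = (n : Ordinal) := by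
    intro x
    by_cases h : x.1 < Ordinal.omega0
    · exact Or.inr (Ordinal.lt_omega0.1 h)
    · left
      exact le_antisymm (Order.lt_add_one_iff.1 x.2) (not_lt.1 h)
  have hcaseY : ∀ y : ↥Y, y.1 = p ∨ ∃ n, y.1 = σ n := by
    intro y
    rcases y.2 with h | ⟨n, hn⟩
    · exact Or.inl h
    · exact Or.inr ⟨n, hn.symm⟩
  have hGF : ∀ x, G (F x) = x := by
    intro x
    rcases hcase x with h | ⟨n, h⟩
    · apply Subtype.ext
      rw [hG_top _ (hF_top x h), h]
    · apply Subtype.ext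
      rw [hG_nat _ n (hF_nat x n h), h]
  have hFG : ∀ y, F (G y) = y := by
    intro y
    rcases hcaseY y with h | ⟨n, h⟩
    · apply Subtype.ext
      rw [hF_top _ (hG_top y h), h]
    · apply Subtype.ext
      rw [hF_nat _ n (hG_nat y n h), h]
  -- isolated points of the left side
  have hsingL : ∀ (x : ↥(Set.Iio (Ordinal.omega0 + 1))) (n : ℕ), x.1 = (n : Ordinal) →
      ({x} : Set ↥(Set.Iio (Ordinal.omega0 + 1))) ∈ 𝓝 x := by
    intro x n hx
    cases n with
    | zero =>
      have hop : IsOpen ((Subtype.val) ⁻¹' (Set.Iio ((0:Ordinal) + 1)) :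
          Set ↥(Set.Iio (Ordinal.omega0 + 1))) :=
        continuous_subtype_val.isOpen_preimage _ _root_.isOpen_Iio
      have heq : ({x} : Set ↥(Set.Iio (Ordinal.omega0 + 1))) =
          (Subtype.val) ⁻¹' (Set.Iio ((0:Ordinal) + 1)) := by
        ext z
        simp only [Set.mem_singleton_iff, Set.mem_preimage, Set.mem_Iio]
        constructor
        · rintro rfl
          rw [hx]; simp
        · intro hz
          apply Subtype.ext
          rw [hx]
          have : z.1 ≤ 0 := Order.lt_add_one_iff.1 hz
          simpa using le_antisymm this zero_le
      rw [heq]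
      exact hop.mem_nhds (by rw [Set.mem_preimage, Set.mem_Iio, hx]; simp)
    | succ q =>
      have hop : IsOpen ((Subtype.val) ⁻¹' (Set.Ioo (q : Ordinal) ((q + 2 : ℕ) : Ordinal)) :
          Set ↥(Set.Iio (Ordinal.omega0 + 1))) :=
        continuous_subtype_val.isOpen_preimage _ isOpen_Ioo
      have heq : ({x} : Set ↥(Set.Iio (Ordinal.omega0 + 1))) =
          (Subtype.val) ⁻¹' (Set.Ioo (q : Ordinal) ((q + 2 : ℕ) : Ordinal)) := by
        ext z
        simp only [Set.mem_singleton_iff, Set.mem_preimage, Set.mem_Ioo]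
        constructor
        · rintro rfl
          rw [hx]
          constructor
          · exact_mod_cast Nat.lt_succ_self q
          · exact_mod_cast (by omega : q + 1 < q + 2)
        · rintro ⟨h1, h2⟩
          apply Subtype.ext
          rw [hx]
          have hzω : z.1 < Ordinal.omega0 :=
            lt_of_lt_of_le h2 (le_of_lt (Ordinal.nat_lt_omega0 _))
          obtain ⟨j, hj⟩ := Ordinal.lt_omega0.1 hzω
          rw [hj] at h1 h2 ⊢
          have hq : q < j := by exact_mod_cast h1
          have hj2 : j < q + 2 := by exact_mod_cast h2
          have : j = q + 1 := by omega
          rw [this]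
      rw [heq]
      refine hop.mem_nhds ?_
      rw [Set.mem_preimage, Set.mem_Ioo, hx]
      constructor
      · exact_mod_cast Nat.lt_succ_self q
      · exact_mod_cast (by omega : q + 1 < q + 2)
  -- isolated points of the right side
  have hsingR : ∀ (y : ↥Y) (n : ℕ), y.1 = σ n → ({y} : Set ↥Y) ∈ 𝓝 y := by
    intro y n hy
    cases n with
    | zero =>
      have hop : IsOpen ((Subtype.val) ⁻¹' (Set.Iio (σ 1)) : Set ↥Y) :=
        continuous_subtype_val.isOpen_preimage _ (isOpen_Iio lad hl (σ 1))
      have heq : ({y} : Set ↥Y) = (Subtype.val) ⁻¹' (Set.Iio (σ 1)) := by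
        ext z
        simp only [Set.mem_singleton_iff, Set.mem_preimage, Set.mem_Iio]
        constructor
        · rintro rfl
          rw [hy]
          exact hmono (by omega)
        · intro hz
          apply Subtype.ext
          rcases hcaseY z with h | ⟨j, h⟩
          · exfalso
            rw [h] at hz
            exact absurd (lt_trans hz (hltp 1)) (lt_irrefl p)
          · rw [h] at hz ⊢
            have : j < 1 := hmono.lt_iff_lt.1 hz
            have : j = 0 := by omega
            rw [this, hy]
      rw [heq]
      exact hop.mem_nhds (by rw [Set.mem_preimage, Set.mem_Iio, hy]; exact hmono (by omega))
    | succ q =>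
      have hop : IsOpen ((Subtype.val) ⁻¹' (Set.Ioi (σ q) ∩ Set.Iio (σ (q+2))) : Set ↥Y) := by
        apply continuous_subtype_val.isOpen_preimage
        exact IsOpen.inter (isOpen_Ioi lad hl (σ q)) (isOpen_Iio lad hl (σ (q+2)))
      have heq : ({y} : Set ↥Y) = (Subtype.val) ⁻¹' (Set.Ioi (σ q) ∩ Set.Iio (σ (q+2))) := by
        ext z
        simp only [Set.mem_singleton_iff, Set.mem_preimage, Set.mem_Ioi, Set.mem_Iio,
          Set.mem_inter_iff]
        constructor
        · rintro rfl
          rw [hy]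
          exact ⟨hmono (by omega), hmono (by omega)⟩
        · rintro ⟨h1, h2⟩
          apply Subtype.ext
          rcases hcaseY z with h | ⟨j, h⟩
          · exfalso
            rw [h] at h2
            exact absurd (lt_trans h2 (hltp (q+2))) (lt_irrefl p)
          · rw [h] at h1 h2 ⊢
            have hq1 : q < j := hmono.lt_iff_lt.1 h1
            have hq2 : j < q + 2 := hmono.lt_iff_lt.1 h2
            have : j = q + 1 := by omega
            rw [this, hy]
      rw [heq]
      refine hop.mem_nhds ?_
      rw [Set.mem_preimage, hy]
      exact ⟨hmono (by omega), hmono (by omega)⟩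
  -- continuity of F
  have hFc : Continuous F := by
    rw [continuous_iff_continuousAt]
    intro x
    rcases hcase x with htop | ⟨n, hnat⟩
    · -- at the top point
      rw [ContinuousAt, Filter.tendsto_def]
      intro s hs
      obtain ⟨v, hvs, hvo, hxv⟩ := mem_nhds_iff.1 hs
      obtain ⟨O, hOo, hOv⟩ := isOpen_induced_iff.1 hvo
      have hpO : p ∈ O := by
        have : (F x).1 ∈ O := by
          rw [← hOv] at hxv
          exact hxv
        rw [hF_top x htop] at this
        exact this
      obtain ⟨K, hK⟩ := hOo p hpO hp m
      refine Filter.mem_of_superset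
        ((continuous_subtype_val.isOpen_preimage _ (_root_.isOpen_Ioi (a := (K:Ordinal)))).mem_nhds
          (by rw [Set.mem_preimage, Set.mem_Ioi, htop]; exact Ordinal.nat_lt_omega0 K)) ?_
      intro z hz
      rw [Set.mem_preimage, Set.mem_Ioi] at hz
      rw [Set.mem_preimage]
      rcases hcase z with hz2 | ⟨j, hz2⟩
      · have : F z = F x := Subtype.ext (by rw [hF_top z hz2, hF_top x htop])
        rw [this]
        exact hvs hxv
      · apply hvs
        have hKj : K ≤ j := by
          rw [hz2] at hz
          exact_mod_cast le_of_lt hz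
        have : (F z).1 ∈ O := by
          rw [hF_nat z j hz2]
          exact hK j hKj
        rw [← hOv]
        exact this
    · -- at an isolated point
      have hpure : 𝓝 x = pure x :=
        le_antisymm (le_pure_iff.2 (hsingL x n hnat)) (pure_le_nhds x)
      rw [ContinuousAt, hpure, Filter.tendsto_pure_left]
      exact fun s hs => mem_of_mem_nhds hs
  -- continuity of G
  have hGc : Continuous G := by
    rw [continuous_iff_continuousAt]
    intro y
    rcases hcaseY y with htop | ⟨n, hnat⟩
    · rw [ContinuousAt, Filter.tendsto_def]
      intro s hs
      obtain ⟨v, hvs, hvo, hyv⟩ := mem_nhds_iff.1 hs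
      obtain ⟨O, hOo, hOv⟩ := isOpen_induced_iff.1 hvo
      have hωO : Ordinal.omega0 ∈ O := by
        have : (G y).1 ∈ O := by rw [← hOv] at hyv; exact hyv
        rw [hG_top y htop] at this
        exact this
      obtain ⟨⟨l, u⟩, ⟨hlω, hωu⟩, hIoo⟩ := (nhds_basis_Ioo' ⟨0, Ordinal.omega0_pos⟩
        ⟨Ordinal.omega0 + 1, Order.lt_add_one_iff.2 le_rfl⟩).mem_iff.1 (hOo.mem_nhds hωO)
      obtain ⟨L, hL⟩ := Ordinal.lt_omega0.1 hlω
      refine Filter.mem_of_superset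
        ((continuous_subtype_val.isOpen_preimage _ (isOpen_Ioi lad hl (σ L))).mem_nhds
          (by rw [Set.mem_preimage, Set.mem_Ioi, htop]; exact hltp L)) ?_
      intro z hz
      rw [Set.mem_preimage, Set.mem_Ioi] at hz
      rw [Set.mem_preimage]
      apply hvs
      rcases hcaseY z with hz2 | ⟨j, hz2⟩
      · have : (G z).1 ∈ O := by
          rw [hG_top z hz2]
          exact hIoo ⟨hlω, hωu⟩
        rw [← hOv]; exact this
      · have hLj : L < j := by
          rw [hz2] at hz
          exact hmono.lt_iff_lt.1 hz
        have : (G z).1 ∈ O := by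
          rw [hG_nat z j hz2]
          apply hIoo
          constructor
          · rw [hL]; exact_mod_cast hLj
          · exact lt_trans (Ordinal.nat_lt_omega0 j) hωu
        rw [← hOv]; exact this
    · have hpure : 𝓝 y = pure y :=
        le_antisymm (le_pure_iff.2 (hsingR y n hnat)) (pure_le_nhds y)
      rw [ContinuousAt, hpure, Filter.tendsto_pure_left]
      exact fun s hs => mem_of_mem_nhds hs
  exact ⟨⟨⟨F, G, fun x => hGF x, fun y => hFG y⟩, hFc, hGc⟩⟩

end Homeo

-- ===================== no copy of ω²+1 =====================
section Negative
variable {lad : W → ℕ → ℕ → W}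

lemma ladder_below_finite (hl : LadderSys lad) (p : W) (hp : Order.IsSuccLimit p.1) (m' : ℕ)
    (c : W) (hc : c < p) : (Set.range (lad p m') ∩ Set.Iio c).Finite := by
  obtain ⟨K, hK⟩ := lad_tail_gt lad hl p hp m' c hc
  apply Set.Finite.subset (Set.Finite.image (lad p m') (Set.finite_Iio K))
  rintro w ⟨⟨k, rfl⟩, hw⟩
  refine ⟨k, ?_, rfl⟩
  rw [Set.mem_Iio]
  by_contra hge
  push_neg at hge
  exact absurd (Set.mem_Iio.1 hw) (not_lt.2 (le_of_lt (hK k hge)))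

lemma tail_avoid_finitely_many (hl : LadderSys lad) (x : W) (hx : Order.IsSuccLimit x.1) (m : ℕ)
    (g : ℕ → W) (J : ℕ) : ∃ K, ∀ k, K ≤ k → ∀ j, j < J → lad x m k ≠ g j := by
  have h : ∀ j : ℕ, ∃ K, ∀ k, K ≤ k → lad x m k ≠ g j := fun j => lad_tail_ne lad hl x hx m (g j)
  choose Kf hKf using h
  refine ⟨(Finset.range J).sup Kf, fun k hk j hj => ?_⟩
  exact hKf j k (le_trans (Finset.le_sup (Finset.mem_range.2 hj)) hk)

lemma omega_mul_succ_lt (k : ℕ) :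
    Ordinal.omega0 * ((k:Ordinal) + 1) < Ordinal.omega0 ^ (2:ℕ) + 1 := by
  rw [pow_two]
  apply lt_trans _ (lt_add_one _)
  apply mul_lt_mul_of_pos_left _ Ordinal.omega0_pos
  exact_mod_cast Ordinal.nat_lt_omega0 (k+1)

lemma omega_sq_mem : Ordinal.omega0 ^ (2:ℕ) < Ordinal.omega0 ^ (2:ℕ) + 1 := lt_add_one _

lemma tendsto_omega_mul :
    Filter.Tendsto (fun k : ℕ => Ordinal.omega0 * ((k:Ordinal) + 1)) Filter.atTop
      (𝓝 (Ordinal.omega0 ^ (2:ℕ))) := by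
  rw [pow_two]
  apply tendsto_atTop_isLUB
  · intro a b hab
    apply mul_le_mul_right
    have : (a:Ordinal) ≤ b := by exact_mod_cast hab
    exact add_le_add_left this 1
  · constructor
    · rintro o ⟨k, rfl⟩
      apply mul_le_mul_right
      exact_mod_cast le_of_lt (Ordinal.nat_lt_omega0 (k+1))
    · intro b hb
      by_contra hlt
      push_neg at hlt
      obtain ⟨c, hc, hbc⟩ := (Ordinal.lt_mul_iff_of_isSuccLimit Ordinal.isSuccLimit_omega0).1 hlt
      obtain ⟨n, rfl⟩ := Ordinal.lt_omega0.1 hc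
      have h1 : Ordinal.omega0 * ((n:Ordinal)+1) ≤ b :=
        hb ⟨n, rfl⟩
      have h2 : Ordinal.omega0 * (n:Ordinal) ≤ Ordinal.omega0 * ((n:Ordinal)+1) :=
        mul_le_mul_right (le_of_lt (lt_add_one _)) _
      exact absurd hbc (not_lt.2 (le_trans h2 h1))

/-- extract an `Ioo`-neighborhood inside an open set of a subtype of ordinals -/
lemma subtype_open_Ioo {c : Ordinal.{0}} (T : Set ↥(Set.Iio c)) (hT : IsOpen T)
    (x : ↥(Set.Iio c)) (hx : x ∈ T) (h0 : 0 < x.1) :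
    ∃ l, l < x.1 ∧ ∀ z : ↥(Set.Iio c), l < z.1 → z.1 ≤ x.1 → z ∈ T := by
  obtain ⟨O, hOo, hOT⟩ := isOpen_induced_iff.1 hT
  have hxO : x.1 ∈ O := by rw [← hOT] at hx; exact hx
  obtain ⟨⟨l, u⟩, ⟨hlx, hxu⟩, hIoo⟩ := (nhds_basis_Ioo' ⟨0, h0⟩
    ⟨x.1 + 1, lt_add_one _⟩).mem_iff.1 (hOo.mem_nhds hxO)
  refine ⟨l, hlx, fun z hz1 hz2 => ?_⟩
  rw [← hOT]
  exact hIoo ⟨hz1, lt_of_le_of_lt hz2 hxu⟩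

lemma no_omega_sq (hl : LadderSys lad) (Y : Set W)
    (hh : Nonempty (@Homeomorph (↥Y) (↥(Set.Iio ((Ordinal.omega0 : Ordinal.{0}) ^ (2:ℕ) + 1)))
        (@instTopologicalSpaceSubtype W _ (topo lad)) inferInstance)) : False := by
  classical
  letI : TopologicalSpace W := topo lad
  obtain ⟨h⟩ := hh
  -- the distinguished points
  set SQ : ↥(Set.Iio (Ordinal.omega0 ^ (2:ℕ) + 1)) := ⟨Ordinal.omega0 ^ (2:ℕ), omega_sq_mem⟩
    with hSQ
  set S : ℕ → ↥(Set.Iio (Ordinal.omega0 ^ (2:ℕ) + 1)) :=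
    fun k => ⟨Ordinal.omega0 * ((k:Ordinal) + 1), omega_mul_succ_lt k⟩ with hS
  set pY : W := (h.symm SQ).1 with hpY
  set q : ℕ → W := fun k => (h.symm (S k)).1 with hq
  -- tendsto q atTop (𝓝 pY)
  have hqt : Filter.Tendsto q Filter.atTop (𝓝 pY) := by
    apply Filter.Tendsto.comp (continuous_subtype_val.tendsto _)
    apply Filter.Tendsto.comp (h.symm.continuous.tendsto _)
    rw [Topology.IsInducing.subtypeVal.tendsto_nhds_iff]
    exact tendsto_omega_mul
  have hqval : ∀ k, q k = (h.symm (S k)).1 := fun k => rfl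
  -- q k ≠ pY
  have hqne : ∀ k, q k ≠ pY := by
    intro k he
    have h2 : h.symm (S k) = h.symm SQ := Subtype.ext he
    have h3 : S k = SQ := by
      have := congrArg h h2
      rwa [h.apply_symm_apply, h.apply_symm_apply] at this
    have h4 : Ordinal.omega0 * ((k:Ordinal) + 1) = Ordinal.omega0 ^ (2:ℕ) :=
      congrArg Subtype.val h3
    have h5 : Ordinal.omega0 * ((k:Ordinal) + 1) < Ordinal.omega0 ^ (2:ℕ) := by
      rw [pow_two]
      apply mul_lt_mul_of_pos_left _ Ordinal.omega0_pos
      exact_mod_cast Ordinal.nat_lt_omega0 (k+1)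
    exact absurd h4 (ne_of_lt h5)
  -- eventually q k > a for a < pY
  have hev_gt : ∀ a : W, a < pY → ∀ᶠ k in Filter.atTop, a < q k := by
    intro a ha
    have := tendsto_nhds.1 hqt (Set.Ioi a) (isOpen_Ioi lad hl a) ha
    exact this
  -- eventually q k < pY
  have hev_lt : ∀ᶠ k in Filter.atTop, q k < pY := by
    have hsucc : pY < ⟨pY.1 + 1, succ_lt_omega1 pY.2⟩ := lt_add_one pY.1
    have := tendsto_nhds.1 hqt (Set.Iio ⟨pY.1 + 1, succ_lt_omega1 pY.2⟩)
      (isOpen_Iio lad hl _) hsucc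
    apply Filter.Eventually.mono this
    intro k hk
    have h1 : (q k).1 < pY.1 + 1 := hk
    have h2 : (q k).1 ≤ pY.1 := Order.lt_add_one_iff.1 h1
    exact lt_of_le_of_ne h2 (hqne k)
  -- pY is a limit
  have hpYlim : Order.IsSuccLimit pY.1 := by
    refine Ordinal.isSuccLimit_iff.2 ⟨?_, Order.isSuccPrelimit_of_succ_lt ?_⟩
    · intro h0
      obtain ⟨k, hk⟩ := hev_lt.exists
      rw [Wlt_iff, h0] at hk
      exact absurd hk (not_lt_of_ge zero_le)
    · intro a ha
      have haW : a < omega1 := lt_trans ha pY.2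
      obtain ⟨k, hk1, hk2⟩ := (Filter.Eventually.and (hev_gt ⟨a, haW⟩ ha) hev_lt).exists
      have h1 : Order.succ a ≤ (q k).1 := Order.succ_le_of_lt hk1
      exact lt_of_le_of_lt h1 hk2
  -- step function for choosing indices
  have hstep : ∀ bound : W, bound < pY → ∀ idx : ℕ,
      ∃ k, idx < k ∧ bound < q k ∧ q k < pY := by
    intro bound hb idx
    obtain ⟨K, hK⟩ := Filter.eventually_atTop.1 ((hev_gt bound hb).and hev_lt)
    refine ⟨max (idx+1) K, ?_, (hK _ (le_max_right _ _)).1, (hK _ (le_max_right _ _)).2⟩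
    have := le_max_left (idx+1) K
    omega
  set e : ℕ → W := lad pY 0 with he
  have helt : ∀ j, e j < pY := hl.lt pY hpYlim 0
  have h0 : ∃ k, 0 < k ∧ e 0 < q k ∧ q k < pY := hstep (e 0) (helt 0) 0
  set Φ : ℕ → {k : ℕ // q k < pY} :=
    fun n => Nat.rec ⟨h0.choose, h0.choose_spec.2.2⟩
      (fun j prev =>
        ⟨(hstep (max (e (j+1)) (q prev.1)) (max_lt (helt (j+1)) prev.2) prev.1).choose,
         (hstep (max (e (j+1)) (q prev.1)) (max_lt (helt (j+1)) prev.2) prev.1).choose_spec.2.2⟩) n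
    with hΦ
  have hΦsucc : ∀ j, ((Φ j).1 < (Φ (j+1)).1) ∧ max (e (j+1)) (q (Φ j).1) < q (Φ (j+1)).1 := by
    intro j
    have hs := (hstep (max (e (j+1)) (q (Φ j).1)) (max_lt (helt (j+1)) (Φ j).2)
      (Φ j).1).choose_spec
    exact ⟨hs.1, hs.2.1⟩
  set φ : ℕ → ℕ := fun j => (Φ j).1 with hφ
  have hφmono : StrictMono φ := strictMono_nat_of_lt_succ (fun j => (hΦsucc j).1)
  set q' : ℕ → W := fun j => q (φ j) with hq'd
  have hq'lt : ∀ j, q' j < pY := fun j => (Φ j).2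
  have hq'succ : ∀ j, q' j < q' (j+1) :=
    fun j => lt_of_le_of_lt (le_max_right _ _) (hΦsucc j).2
  have hq'mono : StrictMono q' := strictMono_nat_of_lt_succ hq'succ
  have hq'e : ∀ j, e j < q' j := by
    intro j
    cases j with
    | zero => exact h0.choose_spec.2.1
    | succ i => exact lt_of_le_of_lt (le_max_left _ _) (hΦsucc i).2
  have hq'cof : ∀ γ : W, γ < pY → ∃ j, γ < q' j := by
    intro γ hγ
    obtain ⟨k, hk⟩ := hl.cof pY hpYlim 0 γ hγ
    exact ⟨k, lt_trans hk (hq'e k)⟩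
  -- choosing the diagonal points
  have hD : ∀ j : ℕ, ∃ d : W, q' j < d ∧ d < q' (j+1) ∧
      (∀ m', m' ≤ j → d ∉ Set.range (lad pY m')) ∧
      ∃ z : ↥(Set.Iio (Ordinal.omega0 ^ (2:ℕ) + 1)), (h.symm z).1 = d ∧
        Ordinal.omega0 * ((φ (j+1) : ℕ) : Ordinal) < z.1 := by
    intro j
    set c : W := q' (j+1) with hc
    have hcp : c < pY := hq'lt (j+1)
    set Fj : Set W := ⋃ m' ∈ Finset.range (j+1), (Set.range (lad pY m') ∩ Set.Iio c) with hFj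
    have hFjfin : Fj.Finite := Set.Finite.biUnion (Finset.range (j+1)).finite_toSet
      (fun m' _ => ladder_below_finite hl pY hpYlim m' c hcp)
    set Oj : Set W := (Set.Ioi (q' j) ∩ Set.Iio ⟨c.1 + 1, succ_lt_omega1 c.2⟩) \ Fj with hOj
    have hOopen : IsOpen Oj := isOpen_diff_ladSmall lad
      (IsOpen.inter (isOpen_Ioi lad hl _) (isOpen_Iio lad hl _))
      (finset_ladSmall lad hl Fj hFjfin)
    have hcO : c ∈ Oj := by
      refine ⟨⟨hq'succ j, lt_add_one c.1⟩, ?_⟩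
      intro hmem
      rw [hFj] at hmem
      simp only [Set.mem_iUnion, Set.mem_inter_iff] at hmem
      obtain ⟨m', _, _, hlt2⟩ := hmem
      exact absurd hlt2 (lt_irrefl c)
    set Pj : Set ↥Y := Subtype.val ⁻¹' Oj with hPj
    have hPopen : IsOpen Pj := continuous_subtype_val.isOpen_preimage _ hOopen
    set Tj : Set ↥(Set.Iio (Ordinal.omega0 ^ (2:ℕ) + 1)) := h.symm ⁻¹' Pj with hTj
    have hTopen : IsOpen Tj := h.symm.continuous.isOpen_preimage _ hPopen
    have hmemT : S (φ (j+1)) ∈ Tj := hcO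
    have h0S : 0 < (S (φ (j+1))).1 :=
      mul_pos Ordinal.omega0_pos
        (lt_of_le_of_lt zero_le (lt_add_one _))
    obtain ⟨l, hlt, hIn⟩ := subtype_open_Ioo Tj hTopen (S (φ (j+1))) hmemT h0S
    set κ : ℕ := φ (j+1) with hκ
    have hκsucclt : Ordinal.omega0 * (κ:Ordinal) < Ordinal.omega0 * ((κ:Ordinal)+1) :=
      mul_lt_mul_of_pos_left (lt_add_one _) Ordinal.omega0_pos
    have hκlim : Order.IsSuccLimit (Ordinal.omega0 * ((κ:Ordinal)+1)) := by
      rw [mul_add, mul_one]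
      exact Ordinal.isSuccLimit_add _ Ordinal.isSuccLimit_omega0
    have hzlt : max l (Ordinal.omega0 * (κ:Ordinal)) + 1 <
        Ordinal.omega0 * ((κ:Ordinal)+1) := by
      rw [Ordinal.add_one_eq_succ]
      exact hκlim.succ_lt (max_lt hlt hκsucclt)
    set z : Ordinal := max l (Ordinal.omega0 * (κ:Ordinal)) + 1 with hz
    have hzsq : z ≤ Ordinal.omega0 ^ (2:ℕ) := by
      apply le_trans (le_of_lt hzlt)
      rw [pow_two]
      apply mul_le_mul_right
      exact_mod_cast le_of_lt (Ordinal.nat_lt_omega0 (κ+1))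
    have hzmem : z ∈ Set.Iio (Ordinal.omega0 ^ (2:ℕ) + 1) :=
      Set.mem_Iio.2 (lt_of_le_of_lt hzsq (lt_add_one _))
    have hzT : (⟨z, hzmem⟩ : ↥(Set.Iio (Ordinal.omega0 ^ (2:ℕ) + 1))) ∈ Tj :=
      hIn ⟨z, hzmem⟩ (lt_of_le_of_lt (le_max_left _ _) (lt_add_one _)) (le_of_lt hzlt)
    have hvalO : (h.symm ⟨z, hzmem⟩).1 ∈ Oj := hzT
    have hne : (h.symm ⟨z, hzmem⟩).1 ≠ c := by
      intro heq
      have h2 : h.symm ⟨z, hzmem⟩ = h.symm (S κ) := Subtype.ext heq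
      have h3 := congrArg h h2
      rw [h.apply_symm_apply, h.apply_symm_apply] at h3
      have h4 : z = Ordinal.omega0 * ((κ:Ordinal)+1) := congrArg Subtype.val h3
      exact absurd h4 (ne_of_lt hzlt)
    have hlec : (h.symm ⟨z, hzmem⟩).1 < c := by
      have h1 : ((h.symm ⟨z, hzmem⟩).1).1 < c.1 + 1 := hvalO.1.2
      have h2 : ((h.symm ⟨z, hzmem⟩).1).1 ≤ c.1 := Order.lt_add_one_iff.1 h1
      exact lt_of_le_of_ne h2 hne
    refine ⟨(h.symm ⟨z, hzmem⟩).1, hvalO.1.1, hlec, ?_, ⟨⟨z, hzmem⟩, rfl, ?_⟩⟩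
    · intro m' hm' hrange
      apply hvalO.2
      rw [hFj]
      simp only [Set.mem_iUnion, Set.mem_inter_iff]
      exact ⟨m', Finset.mem_range.2 (by omega), hrange, hlec⟩
    · exact lt_of_le_of_lt (le_max_right l _) (lt_add_one _)
  choose d hd1 hd2 hd3 zf hzf1 hzf2 using hD
  -- the complement of the diagonal is open
  have hUopen : IsOpen (Set.range d)ᶜ := by
    rw [isOpen_iff]
    intro x hx hxlim m
    rcases lt_trichotomy x pY with hc | hc | hc
    · obtain ⟨J, hJ⟩ := hq'cof x hc
      obtain ⟨K, hK⟩ := tail_avoid_finitely_many hl x hxlim m d J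
      refine ⟨K, fun k hk => ?_⟩
      rintro ⟨j, hj⟩
      by_cases hjJ : j < J
      · exact hK k hk j hjJ hj.symm
      · push_neg at hjJ
        have h1 : q' J ≤ q' j := hq'mono.monotone hjJ
        have h2 : x < d j := lt_trans (lt_of_lt_of_le hJ h1) (hd1 j)
        have h3 : lad x m k < x := hl.lt x hxlim m k
        rw [hj] at h2
        exact absurd h3 (not_lt.2 (le_of_lt h2))
    · obtain ⟨K, hK⟩ := tail_avoid_finitely_many hl x hxlim m d m
      refine ⟨K, fun k hk => ?_⟩
      rintro ⟨j, hj⟩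
      by_cases hjm : j < m
      · exact hK k hk j hjm hj.symm
      · push_neg at hjm
        apply hd3 j m hjm
        refine ⟨k, ?_⟩
        rw [← hc]
        exact hj.symm
    · obtain ⟨K, hK⟩ := lad_tail_gt lad hl x hxlim m pY hc
      refine ⟨K, fun k hk => ?_⟩
      rintro ⟨j, hj⟩
      have h1 : d j < pY := lt_trans (hd2 j) (hq'lt (j+1))
      rw [hj] at h1
      exact absurd (hK k hk) (not_lt.2 (le_of_lt h1))
  have hpYU : pY ∈ (Set.range d)ᶜ := by
    rintro ⟨j, hj⟩
    have : d j < pY := lt_trans (hd2 j) (hq'lt (j+1))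
    rw [hj] at this
    exact absurd this (lt_irrefl pY)
  -- transfer to the ordinal side and contradict
  set T : Set ↥(Set.Iio (Ordinal.omega0 ^ (2:ℕ) + 1)) :=
    h.symm ⁻¹' (Subtype.val ⁻¹' (Set.range d)ᶜ) with hT
  have hTopen : IsOpen T :=
    h.symm.continuous.isOpen_preimage _ (continuous_subtype_val.isOpen_preimage _ hUopen)
  have hSQT : SQ ∈ T := hpYU
  have h0SQ : 0 < SQ.1 :=
    pos_iff_ne_zero.2 (pow_ne_zero 2 Ordinal.omega0_ne_zero)
  obtain ⟨l, hlSQ, hIn⟩ := subtype_open_Ioo T hTopen SQ hSQT h0SQ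
  have hlsq : l < Ordinal.omega0 * Ordinal.omega0 := by
    rw [← pow_two]
    exact hlSQ
  obtain ⟨c', hc', hlc⟩ := (Ordinal.lt_mul_iff_of_isSuccLimit Ordinal.isSuccLimit_omega0).1 hlsq
  obtain ⟨n, rfl⟩ := Ordinal.lt_omega0.1 hc'
  have hκn : ((n:ℕ) : Ordinal) ≤ ((φ (n+1) : ℕ) : Ordinal) := by
    have h1 : n ≤ φ (n+1) := le_trans (Nat.le_succ n) hφmono.le_apply
    exact_mod_cast h1
  have hzn : l < (zf n).1 :=
    lt_of_lt_of_le hlc (le_trans (mul_le_mul_right hκn _) (le_of_lt (hzf2 n)))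
  have hzSQ : (zf n).1 ≤ SQ.1 := Order.lt_add_one_iff.1 (zf n).2
  have hmem := hIn (zf n) hzn hzSQ
  have : (h.symm (zf n)).1 ∈ (Set.range d)ᶜ := hmem
  rw [hzf1 n] at this
  exact this ⟨n, rfl⟩

end Negative
end ClubFProof

open ClubFProof

/-- From a ♣_F-sequence one builds a regular topology `t` on ω₁ refining the
order topology with `(ω₁,t) → (top ω+1)¹_ω`, `(ω₁,t) ↛ (top ω²+1)¹_ω`, and such
that every `A α m` (α limit) contains a strictly increasing sequence
`t`-converging to `α`. -/
theorem clubF_space (A : Ordinal.{0} → ℕ → Set Ordinal.{0}) (hA : IsClubF A) :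
    ∃ t : TopologicalSpace W,
      @T3Space W t ∧
      t ≤ Preorder.topology W ∧
      ArrowTopT t (Ordinal.omega0 + 1) ∧
      ¬ ArrowTopT t (Ordinal.omega0 ^ (2 : ℕ) + 1) ∧
      ∀ (α : Ordinal.{0}) (hα : α < omega1), Order.IsSuccLimit α → ∀ m : ℕ,
        ∃ s : ℕ → W, StrictMono s ∧ (∀ k, (s k).1 ∈ A α m) ∧
          Filter.Tendsto s Filter.atTop (@nhds W t ⟨α, hα⟩) := by
  classical
  -- the ladder system
  set lad : W → ℕ → ℕ → W := fun β m =>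
    if h : Order.IsSuccLimit β.1 then (Classical.choose (exists_ladder hA β h m))
    else fun _ => ⟨0, omega1_pos⟩ with hlad
  have hladl : ∀ (β : W) (h : Order.IsSuccLimit β.1) (m : ℕ),
      lad β m = Classical.choose (exists_ladder hA β h m) := by
    intro β h m
    rw [hlad]
    exact dif_pos h
  have hladnl : ∀ (β : W), ¬Order.IsSuccLimit β.1 → ∀ (m k : ℕ), lad β m k = ⟨0, omega1_pos⟩ := by
    intro β h m k
    rw [hlad]
    exact congrFun (dif_neg h) k
  have hl : LadderSys lad := by
    constructor
    · intro β hβ m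
      rw [hladl β hβ m]
      exact (Classical.choose_spec (exists_ladder hA β hβ m)).1
    · intro β hβ m k
      rw [hladl β hβ m]
      exact (Classical.choose_spec (exists_ladder hA β hβ m)).2.1 k
    · intro β hβ m γ hγ
      rw [hladl β hβ m]
      exact (Classical.choose_spec (exists_ladder hA β hβ m)).2.2.2 γ hγ
    · intro β hβ m k
      rw [hladnl β hβ m k, hladnl β hβ 0 m]
  have hmem : ∀ (β : W) (hβ : Order.IsSuccLimit β.1) (m k : ℕ), (lad β m k).1 ∈ A β.1 m := by
    intro β hβ m k
    rw [hladl β hβ m]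
    exact (Classical.choose_spec (exists_ladder hA β hβ m)).2.2.1 k
  refine ⟨topo lad, t3 hl, topo_le_order lad hl, ?_, ?_, ?_⟩
  · -- positive arrow
    letI := topo lad
    intro f
    set f' : Ordinal.{0} → ℕ := fun γ => if h : γ < omega1 then f ⟨γ, h⟩ else 0 with hf'
    obtain ⟨α, n, m, hα, hlim, hfα, hguess⟩ := hA.2 f'
    set p : W := ⟨α, hα⟩ with hp
    refine ⟨n, insert p (Set.range (lad p m)), ?_, ?_⟩
    · intro y hy
      rcases hy with rfl | ⟨k, rfl⟩
      · have : f' α = f p := by rw [hf']; simp only [dif_pos hα]; rfl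
        rw [Set.mem_preimage, Set.mem_singleton_iff, ← this, hfα]
      · have hmemA : (lad p m k).1 ∈ A α m := hmem p hlim m k
        have h1 : f' (lad p m k).1 = n := hguess _ hmemA
        have h2 : f' (lad p m k).1 = f (lad p m k) := by
          rw [hf']
          simp only [dif_pos (lad p m k).2]
          rfl
        rw [Set.mem_preimage, Set.mem_singleton_iff, ← h2, h1]
    · obtain ⟨e⟩ := ladder_homeo hl p hlim m
      exact ⟨e.symm⟩
  · -- negative arrow
    intro harrow
    obtain ⟨n, Y, hsub, hne⟩ := harrow (fun _ => 0)
    exact no_omega_sq hl Y hne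
  · -- converging ladders
    intro α hα hlim m
    refine ⟨lad ⟨α, hα⟩ m, hl.mono ⟨α, hα⟩ hlim m, fun k => hmem ⟨α, hα⟩ hlim m k, ?_⟩
    exact lad_tendsto lad ⟨α, hα⟩ hlim m
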